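/- For every real number τ, the series Σ_{i=0}^{∞} M^{(0)}_i · τ^i / i! converges absolutely; that is, the power series with coefficients M^{(0)}_i / i! has infinite radius of convergence. -/

import Mathlib

open Finset

def NW : ℕ → ℕ → ℕ → ℕ
  | k, 0, u => if k = 0 ∧ u = 0 then 1 else 0
  | k, i+1, u => (if k = 0 then 0 else NW (k-1) i u) + NW k i u +
      (if u = 0 then 0 else NW (k+1) i (u-1))

lemma NW_support : ∀ i k u : ℕ, i < 2*u + k → NW k i u = 0 := by
  intro i
  induction i with
  | zero =>
    intro k u h
    simp only [NW]
    split
    · omega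
    · rfl
  | succ i ih =>
    intro k u h
    simp only [NW]
    have h1 : (if k = 0 then 0 else NW (k-1) i u) = 0 := by
      split
      · rfl
      · exact ih (k-1) u (by omega)
    have h2 : NW k i u = 0 := ih k u (by omega)
    have h3 : (if u = 0 then 0 else NW (k+1) i (u-1)) = 0 := by
      split
      · rfl
      · exact ih (k+1) (u-1) (by omega)
    omega

lemma NW_diag : ∀ k : ℕ, NW k k 0 = 1 := by
  intro k
  induction k with
  | zero => simp [NW]
  | succ k ih =>
    simp only [NW]
    have h2 : NW (k+1) k 0 = 0 := NW_support k (k+1) 0 (by omega)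
    simp [ih, h2]

lemma NW_mul_le : ∀ i k u : ℕ,
    NW k i u * (u.factorial * (u+k).factorial * (i - (2*u+k)).factorial) ≤ i.factorial := by
  intro i
  induction i with
  | zero =>
    intro k u
    simp only [NW]
    split
    · rename_i h; simp [h.1, h.2, Nat.factorial]
    · simp
  | succ i ih =>
    intro k u
    by_cases h : 2*u + k ≤ i + 1
    · simp only [NW]
      set j := i + 1 - (2*u+k) with hj
      have claim1 : (if k = 0 then 0 else NW (k-1) i u) *
          (u.factorial * (u+k).factorial * j.factorial) ≤ (u+k) * i.factorial := by
        split
        · simp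
        · rename_i hk
          have hIH := ih (k-1) u
          have he : i - (2*u + (k-1)) = j := by omega
          have hf : (u+k).factorial = (u+k) * (u+(k-1)).factorial := by
            have : u + k = (u + (k-1)) + 1 := by omega
            rw [this, Nat.factorial_succ]
          rw [he] at hIH
          calc NW (k-1) i u * (u.factorial * (u+k).factorial * j.factorial)
              = (u+k) * (NW (k-1) i u * (u.factorial * (u+(k-1)).factorial * j.factorial)) := by
                rw [hf]; ring
            _ ≤ (u+k) * i.factorial := Nat.mul_le_mul_left _ hIH
      have claim2 : NW k i u * (u.factorial * (u+k).factorial * j.factorial) ≤ j * i.factorial := by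
        by_cases h2 : 2*u + k ≤ i
        · have hIH := ih k u
          have he : j = (i - (2*u+k)) + 1 := by omega
          calc NW k i u * (u.factorial * (u+k).factorial * j.factorial)
              = j * (NW k i u * (u.factorial * (u+k).factorial * (i - (2*u+k)).factorial)) := by
                rw [he, Nat.factorial_succ, ← he]; ring
            _ ≤ j * i.factorial := Nat.mul_le_mul_left _ hIH
        · have : NW k i u = 0 := NW_support i k u (by omega)
          simp [this]
      have claim3 : (if u = 0 then 0 else NW (k+1) i (u-1)) *
          (u.factorial * (u+k).factorial * j.factorial) ≤ u * i.factorial := by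
        split
        · simp
        · rename_i hu
          have hIH := ih (k+1) (u-1)
          have he : i - (2*(u-1) + (k+1)) = j := by omega
          have hg : (u-1) + (k+1) = u + k := by omega
          rw [he, hg] at hIH
          have hf : u.factorial = u * (u-1).factorial := by
            obtain ⟨v, rfl⟩ : ∃ v, u = v + 1 := ⟨u-1, by omega⟩
            simp [Nat.factorial_succ]
          calc NW (k+1) i (u-1) * (u.factorial * (u+k).factorial * j.factorial)
              = u * (NW (k+1) i (u-1) * ((u-1).factorial * (u+k).factorial * j.factorial)) := by
                rw [hf]; ring
            _ ≤ u * i.factorial := Nat.mul_le_mul_left _ hIH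
      have hsum : (u+k) + j + u = i + 1 := by omega
      calc ((if k = 0 then 0 else NW (k-1) i u) + NW k i u +
              (if u = 0 then 0 else NW (k+1) i (u-1))) *
            (u.factorial * (u+k).factorial * j.factorial)
          = (if k = 0 then 0 else NW (k-1) i u) * (u.factorial * (u+k).factorial * j.factorial)
            + NW k i u * (u.factorial * (u+k).factorial * j.factorial)
            + (if u = 0 then 0 else NW (k+1) i (u-1)) *
              (u.factorial * (u+k).factorial * j.factorial) := by ring
        _ ≤ (u+k) * i.factorial + j * i.factorial + u * i.factorial := by
            exact Nat.add_le_add (Nat.add_le_add claim1 claim2) claim3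
        _ = (i+1) * i.factorial := by rw [← hsum]; ring
        _ = (i+1).factorial := (Nat.factorial_succ i).symm
    · have : NW k (i+1) u = 0 := NW_support (i+1) k u (by omega)
      simp [this]

lemma NW_def1 (k i u : ℕ) : NW k (i+1) u = (if k = 0 then 0 else NW (k-1) i u) + NW k i u +
    (if u = 0 then 0 else NW (k+1) i (u-1)) := rfl
noncomputable def Wr (k i u : ℕ) : ℝ := (NW k i u : ℝ) * ((1:ℝ) + k + u)^(i - (2*u+k))

lemma Wr_nonneg (k i u : ℕ) : 0 ≤ Wr k i u := by
  apply mul_nonneg (Nat.cast_nonneg _)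
  positivity

noncomputable def Sr (k i : ℕ) : ℝ := ∑ u ∈ range (i+1), Wr k i u

lemma Sr_nonneg (k i : ℕ) : 0 ≤ Sr k i :=
  Finset.sum_nonneg fun u _ => Wr_nonneg k i u

lemma Sr_step (k i : ℕ) :
    (if k = 0 then (0:ℝ) else Sr (k-1) i) + (1+(k:ℝ)) * Sr k i + Sr (k+1) i ≤ Sr k (i+1) := by
  have hsplit : Sr k (i+1) =
      (∑ u ∈ range (i+2), ((if k = 0 then 0 else NW (k-1) i u : ℕ) : ℝ) * ((1:ℝ)+k+u)^((i+1) - (2*u+k)))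
      + (∑ u ∈ range (i+2), (NW k i u : ℝ) * ((1:ℝ)+k+u)^((i+1) - (2*u+k)))
      + (∑ u ∈ range (i+2), ((if u = 0 then 0 else NW (k+1) i (u-1) : ℕ) : ℝ) * ((1:ℝ)+k+u)^((i+1) - (2*u+k))) := by
    rw [Sr, ← Finset.sum_add_distrib, ← Finset.sum_add_distrib]
    refine Finset.sum_congr rfl fun u _ => ?_
    rw [Wr, NW_def1]
    push_cast
    ring
  rw [hsplit]
  have sub1 : (if k = 0 then (0:ℝ) else Sr (k-1) i) ≤
      ∑ u ∈ range (i+2), ((if k = 0 then 0 else NW (k-1) i u : ℕ) : ℝ) * ((1:ℝ)+k+u)^((i+1) - (2*u+k)) := by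
    split
    · rename_i hk
      apply Finset.sum_nonneg
      intro u _
      simp [hk]
    · rename_i hk
      have hk1 : 1 ≤ k := Nat.one_le_iff_ne_zero.mpr hk
      rw [Finset.sum_range_succ]
      simp only [NW_support i (k-1) (i+1) (by omega : i < 2*(i+1)+(k-1)), Nat.cast_zero,
        zero_mul, add_zero, Sr]
      apply Finset.sum_le_sum
      intro u _
      rcases Nat.eq_zero_or_pos (NW (k-1) i u) with h0 | hpos
      · rw [Wr, h0]; simp
      · have hle : 2*u + (k-1) ≤ i := by
          by_contra hc
          exact absurd (NW_support i (k-1) u (by omega)) (by omega)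
        rw [Wr]
        have hexp : i - (2*u + (k-1)) = (i+1) - (2*u+k) := by omega
        rw [hexp]
        have hcast : ((k-1 : ℕ) : ℝ) = (k:ℝ) - 1 := by
          rw [Nat.cast_sub hk1]; simp
        refine mul_le_mul_of_nonneg_left (pow_le_pow_left₀ (by positivity) ?_ _) (Nat.cast_nonneg _)
        rw [hcast]
        have := Nat.cast_nonneg (α := ℝ) u
        linarith
  have sub2 : (1+(k:ℝ)) * Sr k i ≤
      ∑ u ∈ range (i+2), (NW k i u : ℝ) * ((1:ℝ)+k+u)^((i+1) - (2*u+k)) := by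
    rw [Finset.sum_range_succ, NW_support i k (i+1) (by omega)]
    simp only [Nat.cast_zero, zero_mul, add_zero, Sr, Finset.mul_sum]
    apply Finset.sum_le_sum
    intro u _
    rcases Nat.eq_zero_or_pos (NW k i u) with h0 | hpos
    · rw [Wr, h0]; simp
    · have hle : 2*u + k ≤ i := by
        by_contra hc
        exact absurd (NW_support i k u (by omega)) (by omega)
      rw [Wr]
      have hexp : (i+1) - (2*u+k) = (i - (2*u+k)) + 1 := by omega
      rw [hexp, pow_succ]
      calc (1+(k:ℝ)) * ((NW k i u : ℝ) * ((1:ℝ)+k+u)^(i - (2*u+k)))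
          = ((NW k i u : ℝ) * ((1:ℝ)+k+u)^(i - (2*u+k))) * (1+(k:ℝ)) := by ring
        _ ≤ ((NW k i u : ℝ) * ((1:ℝ)+k+u)^(i - (2*u+k))) * ((1:ℝ)+k+u) := by
            have h1 : (0:ℝ) ≤ (NW k i u : ℝ) * ((1:ℝ)+k+u)^(i - (2*u+k)) := by positivity
            have h2 : (1:ℝ)+(k:ℝ) ≤ 1+k+u := by
              have := Nat.cast_nonneg (α := ℝ) u
              linarith
            exact mul_le_mul_of_nonneg_left h2 h1
        _ = (NW k i u : ℝ) * (((1:ℝ)+k+u)^(i - (2*u+k)) * ((1:ℝ)+k+u)) := by ring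
  have sub3 : Sr (k+1) i ≤
      ∑ u ∈ range (i+2), ((if u = 0 then 0 else NW (k+1) i (u-1) : ℕ) : ℝ) * ((1:ℝ)+k+u)^((i+1) - (2*u+k)) := by
    rw [Finset.sum_range_succ' _ (i+1)]
    simp only [Nat.add_sub_cancel, if_neg (Nat.succ_ne_zero _)]
    rw [Sr]
    have heq : ∀ u ∈ range (i+1), Wr (k+1) i u =
        (NW (k+1) i u : ℝ) * ((1:ℝ)+k+(u+1:ℕ))^((i+1) - (2*(u+1)+k)) := by
      intro u _
      rw [Wr]
      have hexp : i - (2*u + (k+1)) = (i+1) - (2*(u+1)+k) := by omega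
      rw [hexp]
      congr 1
      push_cast
      ring_nf
    rw [Finset.sum_congr rfl heq]
    simp
  linarith [sub1, sub2, sub3]
noncomputable def Kf (x : ℝ) (i u : ℕ) : ℝ :=
  if 2*u ≤ i then
    x^i * ((1:ℝ)+u)^(i-2*u) / ((u.factorial:ℝ) * u.factorial * (i-2*u).factorial)
  else 0

lemma Kf_nonneg {x : ℝ} (hx : 0 ≤ x) (i u : ℕ) : 0 ≤ Kf x i u := by
  rw [Kf]
  split
  · positivity
  · exact le_rfl

lemma Wr_le_Kf {x : ℝ} (hx : 0 ≤ x) (i u : ℕ) :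
    Wr 0 i u * x^i / (i.factorial : ℝ) ≤ Kf x i u := by
  by_cases h2 : 2*u ≤ i
  · rw [Kf, if_pos h2, Wr]
    simp only [Nat.cast_zero, add_zero, Nat.add_zero, zero_add]
    have key : (NW 0 i u : ℝ) * ((u.factorial : ℝ) * u.factorial * (i-2*u).factorial)
        ≤ (i.factorial : ℝ) := by
      have := NW_mul_le i 0 u
      simp only [Nat.add_zero, Nat.zero_add] at this
      exact_mod_cast this
    rw [div_le_div_iff₀ (by positivity) (by positivity)]
    calc (NW 0 i u : ℝ) * ((1:ℝ)+u)^(i-2*u) * x^i *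
            ((u.factorial:ℝ) * u.factorial * (i-2*u).factorial)
        = (((1:ℝ)+u)^(i-2*u) * x^i) *
            ((NW 0 i u : ℝ) * ((u.factorial:ℝ) * u.factorial * (i-2*u).factorial)) := by ring
      _ ≤ (((1:ℝ)+u)^(i-2*u) * x^i) * (i.factorial : ℝ) :=
          mul_le_mul_of_nonneg_left key (by positivity)
      _ = x^i * ((1:ℝ)+u)^(i-2*u) * (i.factorial : ℝ) := by ring
  · rw [Kf, if_neg h2, Wr, NW_support i 0 u (by omega)]
    simp

lemma summable_Kf {x : ℝ} (hx : 0 ≤ x) :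
    Summable (fun i : ℕ => ∑ u ∈ range (i+1), Kf x i u) := by
  -- summability of the reindexed family
  have hG : Summable (fun q : ℕ × ℕ => Kf x (2*q.1 + q.2) q.1) := by
    have hform : ∀ q : ℕ × ℕ, Kf x (2*q.1+q.2) q.1 =
        ((x^2)^q.1 / ((q.1.factorial:ℝ) * q.1.factorial)) *
          ((((1:ℝ)+q.1)*x)^q.2 / (q.2.factorial : ℝ)) := by
      intro q
      rw [Kf, if_pos (by omega)]
      have he : 2*q.1 + q.2 - 2*q.1 = q.2 := by omega
      rw [he, pow_add, pow_mul, mul_pow]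
      have h1 : ((q.1.factorial:ℝ)) ≠ 0 := Nat.cast_ne_zero.mpr q.1.factorial_ne_zero
      have h2 : ((q.2.factorial:ℝ)) ≠ 0 := Nat.cast_ne_zero.mpr q.2.factorial_ne_zero
      field_simp
    refine (summable_congr hform).mpr ?_
    refine (summable_prod_of_nonneg (fun q => by positivity)).mpr ⟨?_, ?_⟩
    · intro u
      dsimp only
      exact (Real.summable_pow_div_factorial _).mul_left _
    · have hts : ∀ u : ℕ, ∑' j : ℕ,
          ((x^2)^u / ((u.factorial:ℝ) * u.factorial)) * ((((1:ℝ)+u)*x)^j / (j.factorial : ℝ))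
          = ((x^2)^u / ((u.factorial:ℝ) * u.factorial)) * Real.exp (((1:ℝ)+u)*x) := by
        intro u
        rw [tsum_mul_left]
        congr 1
        rw [Real.exp_eq_exp_ℝ, NormedSpace.exp_eq_tsum_div]
      refine (summable_congr hts).mpr ?_
      have hbnd : ∀ u : ℕ,
          ((x^2)^u / ((u.factorial:ℝ) * u.factorial)) * Real.exp (((1:ℝ)+u)*x)
          ≤ Real.exp x * ((x^2 * Real.exp x)^u / (u.factorial : ℝ)) := by
        intro u
        have hexp : Real.exp (((1:ℝ)+u)*x) = Real.exp x * (Real.exp x)^u := by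
          rw [show ((1:ℝ)+u)*x = x + u*x by ring, Real.exp_add, Real.exp_nat_mul]
        have hfac1 : (1:ℝ) ≤ (u.factorial : ℝ) := by
          exact_mod_cast u.factorial_pos
        have hfacpos : (0:ℝ) < (u.factorial : ℝ) := by positivity
        have h1 : (x^2)^u / ((u.factorial:ℝ)*u.factorial) ≤ (x^2)^u / (u.factorial:ℝ) := by
          apply div_le_div_of_nonneg_left (by positivity) hfacpos
          nlinarith
        calc (x^2)^u / ((u.factorial:ℝ) * u.factorial) * Real.exp (((1:ℝ)+u)*x)
            = (x^2)^u / ((u.factorial:ℝ)*u.factorial) * (Real.exp x * Real.exp x ^ u) := by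
              rw [hexp]
          _ ≤ (x^2)^u / (u.factorial:ℝ) * (Real.exp x * Real.exp x ^ u) :=
              mul_le_mul_of_nonneg_right h1 (by positivity)
          _ = Real.exp x * ((x^2 * Real.exp x)^u / (u.factorial:ℝ)) := by
              rw [mul_pow]; ring
      refine Summable.of_nonneg_of_le (fun u => by positivity) hbnd ?_
      exact (Real.summable_pow_div_factorial _).mul_left _
  have hφ : Function.Injective (fun q : ℕ×ℕ => ((2*q.1+q.2, q.1) : ℕ × ℕ)) := by
    intro a b h
    simp only [Prod.mk.injEq] at h
    obtain ⟨h1, h2⟩ := h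
    have : a.2 = b.2 := by omega
    exact Prod.ext h2 this
  have hvan : ∀ p ∉ Set.range (fun q : ℕ×ℕ => ((2*q.1+q.2, q.1) : ℕ × ℕ)),
      Kf x p.1 p.2 = 0 := by
    intro p hp
    rw [Kf, if_neg]
    intro hc
    refine hp ⟨(p.2, p.1 - 2*p.2), ?_⟩
    refine Prod.ext ?_ rfl
    simp only
    omega
  have hK : Summable (fun p : ℕ × ℕ => Kf x p.1 p.2) :=
    (Function.Injective.summable_iff hφ hvan).mp hG
  have h2 := ((summable_prod_of_nonneg (fun p => Kf_nonneg hx p.1 p.2)).mp hK).2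
  refine (summable_congr ?_).mpr h2
  intro i
  refine (tsum_eq_sum ?_).symm
  intro u hu
  rw [Kf, if_neg]
  simp only [Finset.mem_range, not_lt] at hu
  omega

/-- the power series `∑ M^{(0)}_i τ^i / i!` converges absolutely for every real `τ`. -/
theorem stmt_4
    (M : ℕ → ℕ → ℝ)
    (hM_zero : ∀ k i : ℕ, i < k → M k i = 0)
    (hM_diag : ∀ k : ℕ, M k k = 1)
    (hM_rec : ∀ k i : ℕ, k ≤ i →
      M k (i + 1) = (if k = 0 then 0 else M (k - 1) i) + (1 + (k : ℝ)) * M k i + M (k + 1) i) :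
    ∀ τ : ℝ, Summable (fun i : ℕ => |M 0 i * τ ^ i / (i.factorial : ℝ)|) := by
  -- nonnegativity of M
  have hMnn : ∀ i k : ℕ, 0 ≤ M k i := by
    intro i
    induction i with
    | zero =>
      intro k
      rcases Nat.eq_zero_or_pos k with rfl | hk
      · rw [hM_diag]; norm_num
      · rw [hM_zero k 0 hk]
    | succ i ih =>
      intro k
      rcases lt_trichotomy k (i+1) with hk | hk | hk
      · have hle : k ≤ i := by omega
        rw [hM_rec k i hle]
        have h1 : (0:ℝ) ≤ if k = 0 then 0 else M (k-1) i := by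
          split
          · exact le_rfl
          · exact ih (k-1)
        have h2 : (0:ℝ) ≤ (1+(k:ℝ)) * M k i := by
          apply mul_nonneg _ (ih k)
          positivity
        have h3 := ih (k+1)
        linarith
      · rw [hk, hM_diag]; norm_num
      · rw [hM_zero k (i+1) hk]
  -- M is dominated by Sr
  have hMS : ∀ i k : ℕ, M k i ≤ Sr k i := by
    intro i
    induction i with
    | zero =>
      intro k
      rcases Nat.eq_zero_or_pos k with rfl | hk
      · rw [hM_diag]
        have h1 : Sr 0 0 = 1 := by
          simp [Sr, Wr, NW_diag 0]
        rw [h1]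
      · rw [hM_zero k 0 hk]
        exact Sr_nonneg k 0
    | succ i ih =>
      intro k
      rcases lt_trichotomy k (i+1) with hk | hk | hk
      · have hle : k ≤ i := by omega
        rw [hM_rec k i hle]
        have h1 : (if k = 0 then (0:ℝ) else M (k-1) i) ≤ (if k = 0 then (0:ℝ) else Sr (k-1) i) := by
          split
          · exact le_rfl
          · exact ih (k-1)
        have h2 : (1+(k:ℝ)) * M k i ≤ (1+(k:ℝ)) * Sr k i := by
          apply mul_le_mul_of_nonneg_left (ih k)
          positivity
        have h3 := ih (k+1)
        have h4 := Sr_step k i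
        linarith
      · subst hk
        rw [hM_diag]
        have h0 : Wr (i+1) (i+1) 0 = 1 := by
          rw [Wr, NW_diag]
          simp
        calc (1:ℝ) = Wr (i+1) (i+1) 0 := h0.symm
          _ ≤ Sr (i+1) (i+1) := by
              apply Finset.single_le_sum (fun u _ => Wr_nonneg (i+1) (i+1) u)
              simp
      · rw [hM_zero k (i+1) hk]
        exact Sr_nonneg k (i+1)
  intro τ
  have hx : (0:ℝ) ≤ |τ| := abs_nonneg τ
  refine Summable.of_nonneg_of_le (fun i => abs_nonneg _) ?_ (summable_Kf hx)
  intro i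
  have habs : |M 0 i * τ^i / (i.factorial : ℝ)| = M 0 i * |τ|^i / (i.factorial : ℝ) := by
    rw [abs_div, abs_mul, abs_pow, abs_of_nonneg (hMnn i 0), Nat.abs_cast]
  rw [habs]
  have h1 : M 0 i * |τ|^i / (i.factorial : ℝ) ≤ Sr 0 i * |τ|^i / (i.factorial : ℝ) := by
    have hf : (0:ℝ) < (i.factorial : ℝ) := by
      exact_mod_cast i.factorial_pos
    gcongr
    exact hMS i 0
  refine h1.trans ?_
  rw [Sr, Finset.sum_mul, Finset.sum_div]
  exact Finset.sum_le_sum fun u _ => Wr_le_Kf hx i u
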